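/- Let z_1,...,z_n be mutually independent with z_j ~ Bernoulli(p_j), p_j ∈ (0,1), and fix a finite neighborhood N_i with treatment probabilities p_j. For any S' ⊆ N_i with |S'| ≤ β, the expectation E[ (∑_{S ⊆ N_i, |S| ≤ β} g(S) ∏_{j∈S} (z_j−p_j)/(p_j(1−p_j))) · ∏_{j'∈S'} z_{j'} ] equals 1 if S' is nonempty and 0 if S' = ∅, where g(S) = ∏_{s∈S}(1−p_s) − ∏_{s∈S}(−p_s) and g(∅) = 0. -/

import Mathlib

open Finset Real

/-- Value of a Bernoulli treatment bit as a real number. -/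
noncomputable def zval : Bool → ℝ := fun b => if b then 1 else 0

/-- Expectation of `f` under `n` mutually independent Bernoulli(`p j`) bits. -/
noncomputable def bexp {n : ℕ} (p : Fin n → ℝ) (f : (Fin n → Bool) → ℝ) : ℝ :=
  ∑ z : Fin n → Bool, (∏ j, if z j then p j else 1 - p j) * f z

/-- The SNIPE coefficient function `g`. -/
noncomputable def gcoef {n : ℕ} (p : Fin n → ℝ) (S : Finset (Fin n)) : ℝ :=
  if S.Nonempty then (∏ s ∈ S, (1 - p s)) - ∏ s ∈ S, (-p s) else 0

lemma bexp_prod {n : ℕ} (p : Fin n → ℝ) (T : Finset (Fin n)) (f : Fin n → Bool → ℝ) :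
    bexp p (fun z => ∏ j ∈ T, f j (z j))
      = ∏ j ∈ T, (p j * f j true + (1 - p j) * f j false) := by
  unfold bexp
  have key : ∀ z : Fin n → Bool,
      (∏ j, if z j then p j else 1 - p j) * ∏ j ∈ T, f j (z j)
      = ∏ j, ((if z j then p j else 1 - p j) * (if j ∈ T then f j (z j) else 1)) := by
    intro z
    rw [Finset.prod_mul_distrib]
    congr 1
    rw [← Finset.prod_subset (Finset.subset_univ T) (by intro x _ hx; simp [hx])]
    exact Finset.prod_congr rfl (fun x hx => by simp [hx])
  simp only [key]
  rw [← Fintype.prod_sum (fun j b => (if b then p j else 1 - p j) * (if j ∈ T then f j b else 1))]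
  rw [← Finset.prod_subset (Finset.subset_univ T) (by intro x _ hx; simp [hx])]
  refine Finset.prod_congr rfl (fun x hx => by simp [hx, Fintype.sum_bool, add_comm])

theorem stmt3 {n : ℕ} (p : Fin n → ℝ) (hp : ∀ j, 0 < p j ∧ p j < 1)
    (N : Finset (Fin n)) (β : ℕ) (hβ : 1 ≤ β)
    (S' : Finset (Fin n)) (hS' : S' ⊆ N) (hcard : S'.card ≤ β) :
    bexp p (fun z =>
      (∑ S ∈ N.powerset.filter (fun S => S.card ≤ β),
        gcoef p S * ∏ j ∈ S, ((zval (z j) - p j) / (p j * (1 - p j)))) *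
      ∏ j ∈ S', zval (z j))
    = if S'.Nonempty then 1 else 0 := by
  classical
  -- linearity
  have hlin : bexp p (fun z =>
      (∑ S ∈ N.powerset.filter (fun S => S.card ≤ β),
        gcoef p S * ∏ j ∈ S, ((zval (z j) - p j) / (p j * (1 - p j)))) *
      ∏ j ∈ S', zval (z j))
      = ∑ S ∈ N.powerset.filter (fun S => S.card ≤ β),
          gcoef p S * bexp p (fun z =>
            (∏ j ∈ S, ((zval (z j) - p j) / (p j * (1 - p j)))) * ∏ j ∈ S', zval (z j)) := by
    unfold bexp
    simp only [Finset.sum_mul, Finset.mul_sum]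
    rw [Finset.sum_comm]
    refine Finset.sum_congr rfl (fun S _ => ?_)
    refine Finset.sum_congr rfl (fun z _ => by ring)
  rw [hlin]
  -- for each S, compute the expectation
  have hexp : ∀ S ∈ N.powerset.filter (fun S => S.card ≤ β),
      bexp p (fun z =>
        (∏ j ∈ S, ((zval (z j) - p j) / (p j * (1 - p j)))) * ∏ j ∈ S', zval (z j))
      = if S ⊆ S' then ∏ j ∈ S' \ S, p j else 0 := by
    intro S _
    set f : Fin n → Bool → ℝ := fun j b =>
      (if j ∈ S then (zval b - p j) / (p j * (1 - p j)) else 1) *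
      (if j ∈ S' then zval b else 1) with hf
    have heq : (fun z : Fin n → Bool =>
        (∏ j ∈ S, ((zval (z j) - p j) / (p j * (1 - p j)))) * ∏ j ∈ S', zval (z j))
        = fun z => ∏ j ∈ S ∪ S', f j (z j) := by
      funext z
      simp only [hf, Finset.prod_mul_distrib]
      congr 1
      · rw [← Finset.prod_subset (Finset.subset_union_left) (by intro x _ hx; simp [hx])]
        exact Finset.prod_congr rfl (fun x hx => by simp [hx])
      · rw [← Finset.prod_subset (Finset.subset_union_right) (by intro x _ hx; simp [hx])]
        exact Finset.prod_congr rfl (fun x hx => by simp [hx])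
    rw [heq, bexp_prod]
    have hfac : ∀ j ∈ S ∪ S', (p j * f j true + (1 - p j) * f j false)
        = if j ∈ S then (if j ∈ S' then 1 else 0) else p j := by
      intro j hj
      obtain ⟨h0, h1⟩ := hp j
      have hne : p j * (1 - p j) ≠ 0 := by nlinarith
      by_cases hjS : j ∈ S <;> by_cases hjS' : j ∈ S'
      · simp only [hf, hjS, hjS', if_true, zval]
        simp only [if_true, if_false, Bool.false_eq_true, mul_one, mul_zero, add_zero]
        field_simp
        exact div_self (by linarith)
      · simp only [hf, hjS, hjS', if_true, if_false, zval]
        simp only [if_true, if_false, Bool.false_eq_true, mul_one]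
        field_simp
        ring
      · simp only [hf, hjS, hjS', if_true, if_false, zval]
        simp
      · exact absurd hj (by simp [hjS, hjS'])
    rw [Finset.prod_congr rfl hfac]
    by_cases hsub : S ⊆ S'
    · simp only [hsub, if_true]
      have : S ∪ S' = S' := Finset.union_eq_right.mpr hsub
      rw [this]
      rw [← Finset.prod_sdiff hsub]
      have h1 : ∏ j ∈ S' \ S, (if j ∈ S then (if j ∈ S' then 1 else 0) else p j)
          = ∏ j ∈ S' \ S, p j := by
        refine Finset.prod_congr rfl (fun j hj => ?_)
        simp [(Finset.mem_sdiff.mp hj).2]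
      have h2 : ∏ j ∈ S, (if j ∈ S then (if j ∈ S' then 1 else 0) else p j) = 1 := by
        refine Finset.prod_eq_one (fun j hj => ?_)
        simp [hj, hsub hj]
      rw [h1, h2, mul_one]
    · simp only [hsub, if_false]
      obtain ⟨j, hjS, hjS'⟩ := Finset.not_subset.mp hsub
      refine Finset.prod_eq_zero (Finset.mem_union_left _ hjS) ?_
      simp [hjS, hjS']
  have hsum : ∑ S ∈ N.powerset.filter (fun S => S.card ≤ β),
      gcoef p S * bexp p (fun z =>
        (∏ j ∈ S, ((zval (z j) - p j) / (p j * (1 - p j)))) * ∏ j ∈ S', zval (z j))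
      = ∑ S ∈ N.powerset.filter (fun S => S.card ≤ β),
          gcoef p S * (if S ⊆ S' then ∏ j ∈ S' \ S, p j else 0) :=
    Finset.sum_congr rfl (fun S hS => by rw [hexp S hS])
  rw [hsum]
  -- restrict the sum to powerset of S'
  have hrestrict : ∑ S ∈ N.powerset.filter (fun S => S.card ≤ β),
      gcoef p S * (if S ⊆ S' then ∏ j ∈ S' \ S, p j else 0)
      = ∑ S ∈ S'.powerset, gcoef p S * ∏ j ∈ S' \ S, p j := by
    rw [← Finset.sum_filter_add_sum_filter_not (N.powerset.filter (fun S => S.card ≤ β))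
      (fun S => S ⊆ S')]
    have hz : ∑ S ∈ (N.powerset.filter (fun S => S.card ≤ β)).filter (fun S => ¬ S ⊆ S'),
        gcoef p S * (if S ⊆ S' then ∏ j ∈ S' \ S, p j else 0) = 0 := by
      refine Finset.sum_eq_zero (fun S hS => ?_)
      simp [(Finset.mem_filter.mp hS).2]
    rw [hz, add_zero]
    have hset : (N.powerset.filter (fun S => S.card ≤ β)).filter (fun S => S ⊆ S')
        = S'.powerset := by
      ext S
      simp only [Finset.mem_filter, Finset.mem_powerset]
      constructor
      · rintro ⟨⟨_, _⟩, h⟩; exact h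
      · intro h
        exact ⟨⟨h.trans hS', (Finset.card_le_card h).trans hcard⟩, h⟩
    rw [hset]
    refine Finset.sum_congr rfl (fun S hS => ?_)
    simp [Finset.mem_powerset.mp hS]
  rw [hrestrict]
  -- gcoef rewrite
  have hg : ∀ S : Finset (Fin n), gcoef p S = (∏ s ∈ S, (1 - p s)) - ∏ s ∈ S, (-p s) := by
    intro S
    unfold gcoef
    by_cases h : S.Nonempty
    · simp [h]
    · rw [Finset.not_nonempty_iff_eq_empty] at h
      simp [h]
  simp only [hg, sub_mul, Finset.sum_sub_distrib]
  have e1 : ∑ S ∈ S'.powerset, (∏ s ∈ S, (1 - p s)) * ∏ j ∈ S' \ S, p j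
      = ∏ j ∈ S', ((1 - p j) + p j) := (Finset.prod_add _ _ _).symm
  have e2 : ∑ S ∈ S'.powerset, (∏ s ∈ S, (-p s)) * ∏ j ∈ S' \ S, p j
      = ∏ j ∈ S', ((-p j) + p j) := (Finset.prod_add _ _ _).symm
  rw [e1, e2]
  have honep : ∏ j ∈ S', (1 - p j + p j) = 1 := Finset.prod_eq_one (fun j _ => by ring)
  rw [honep]
  by_cases h : S'.Nonempty
  · obtain ⟨j, hj⟩ := h
    rw [Finset.prod_eq_zero hj (by ring), if_pos ⟨j, hj⟩]
    ring
  · rw [Finset.not_nonempty_iff_eq_empty] at h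
    simp [h]
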